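/- Let λ ∈ (0,1) and σ > 0, and let f : ℝ → ℝ be λ-Lipschitz and odd (f(−x) = −f(x) for all x). Let X₁ ∼ N(0,1) and let (ω_t)_{t≥1} be i.i.d. N(0,σ²) random variables, all mutually independent, and define the random recursion X_{t+1} = f(X_t) + ω_t for t ≥ 1. Then for every t ≥ 1: the law of X_t is symmetric (X_t and −X_t have the same law), 𝔼[X_t] = 0, and for every r ≥ 0, ℙ(X_t ≥ r) ≤ exp(−r² / (2·τ_t²)), where τ_t² := λ^{2(t−1)} + σ²·(1 − λ^{2(t−1)})/(1 − λ²). -/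

import Mathlib

open MeasureTheory ProbabilityTheory
open scoped ENNReal

open Real
open scoped NNReal

lemma exp_add_exp_neg_mono {u w : ℝ} (h : |u| ≤ |w|) :
    Real.exp u + Real.exp (-u) ≤ Real.exp w + Real.exp (-w) := by
  have := Real.cosh_le_cosh.mpr h
  rw [Real.cosh_eq, Real.cosh_eq] at this
  linarith

lemma gaussianPDFReal_mul_exp {v : ℝ≥0} (hv : v ≠ 0) (s x : ℝ) :
    gaussianPDFReal 0 v x * Real.exp (s * x)
      = Real.exp ((v : ℝ) * s ^ 2 / 2) * gaussianPDFReal ((v : ℝ) * s) v x := by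
  have hv' : (0 : ℝ) < v := by positivity
  simp only [gaussianPDFReal]
  rw [mul_assoc, ← Real.exp_add,
    show -(x - 0) ^ 2 / (2 * (v : ℝ)) + s * x
        = (v : ℝ) * s ^ 2 / 2 + -(x - (v : ℝ) * s) ^ 2 / (2 * (v : ℝ)) by
      field_simp; ring,
    Real.exp_add]
  ring

lemma gaussianPDF_smul_eq {v : ℝ≥0} (hv : v ≠ 0) (s : ℝ) :
    (fun x => ((gaussianPDFReal 0 v x).toNNReal : ℝ≥0) • Real.exp (s * x))
      = fun x => Real.exp ((v : ℝ) * s ^ 2 / 2) * gaussianPDFReal ((v : ℝ) * s) v x := by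
  funext x
  rw [NNReal.smul_def, smul_eq_mul,
    Real.coe_toNNReal _ (gaussianPDFReal_nonneg 0 v x), gaussianPDFReal_mul_exp hv]

lemma integrable_exp_gaussianReal (v : ℝ≥0) (s : ℝ) :
    Integrable (fun x => Real.exp (s * x)) (gaussianReal 0 v) := by
  by_cases hv : v = 0
  · subst hv
    rw [gaussianReal_zero_var]
    exact (integrable_const _).congr (ae_eq_dirac (fun x => Real.exp (s * x))).symm
  · rw [gaussianReal_of_var_ne_zero _ hv, gaussianPDF_def]
    rw [show (fun x => ENNReal.ofReal (gaussianPDFReal 0 v x))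
        = fun x => (((gaussianPDFReal 0 v x).toNNReal : ℝ≥0) : ℝ≥0∞) from rfl]
    rw [integrable_withDensity_iff_integrable_smul
      ((measurable_gaussianPDFReal 0 v).real_toNNReal)]
    rw [gaussianPDF_smul_eq hv s]
    exact (integrable_gaussianPDFReal _ _).const_mul _

lemma integral_exp_gaussianReal (v : ℝ≥0) (s : ℝ) :
    ∫ x, Real.exp (s * x) ∂(gaussianReal 0 v) = Real.exp ((v : ℝ) * s ^ 2 / 2) := by
  by_cases hv : v = 0
  · subst hv
    rw [gaussianReal_zero_var, integral_dirac]
    simp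
  · rw [gaussianReal_of_var_ne_zero _ hv, gaussianPDF_def]
    rw [show (fun x => ENNReal.ofReal (gaussianPDFReal 0 v x))
        = fun x => (((gaussianPDFReal 0 v x).toNNReal : ℝ≥0) : ℝ≥0∞) from rfl]
    rw [integral_withDensity_eq_integral_smul
      ((measurable_gaussianPDFReal 0 v).real_toNNReal)]
    rw [show (fun x => ((gaussianPDFReal 0 v x).toNNReal : ℝ≥0) • Real.exp (s * x))
        = fun x => Real.exp ((v : ℝ) * s ^ 2 / 2) * gaussianPDFReal ((v : ℝ) * s) v x
      from gaussianPDF_smul_eq hv s]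
    rw [integral_const_mul, integral_gaussianPDFReal_eq_one _ hv, mul_one]

lemma gaussianReal_map_neg' (v : ℝ≥0) :
    (gaussianReal 0 v).map (fun x : ℝ => -x) = gaussianReal 0 v := by
  have h := gaussianReal_map_const_mul (μ := 0) (v := v) (-1)
  have h1 : NNReal.mk ((-1 : ℝ) ^ 2) (sq_nonneg _) = 1 := by
    rw [← NNReal.coe_inj]; norm_num
  have h2 : ((-1 : ℝ) * ·) = (fun x : ℝ => -x) := by funext x; ring
  rw [h2, h1, one_mul, mul_zero] at h
  exact h

/-- **Symmetry and Gaussian concentration for a Lipschitz odd closed-loop recursion with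
Gaussian noise.** Let `f : ℝ → ℝ` be `λ`-Lipschitz (`λ ∈ (0,1)`) and odd, let
`X₁ ∼ N(0,1)` and `(ω_t)_{t≥1}` i.i.d. `N(0,σ²)`, all mutually independent (encoded by
the family `ξ`, with `ξ 0 = X₁` and `ξ t = ω_t` for `t ≥ 1`), and define
`X_{t+1} = f(X_t) + ω_t`.  Then for every `t ≥ 1` the law of `X_t` is symmetric,
`𝔼[X_t] = 0`, and `ℙ(X_t ≥ r) ≤ exp(−r²/(2 τ_t²))` for every `r ≥ 0`, where
`τ_t² = λ^{2(t−1)} + σ²·(1 − λ^{2(t−1)})/(1 − λ²)`. -/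
theorem lipschitz_odd_recursion_gaussian_concentration
    (lam σ : ℝ) (hlam0 : 0 < lam) (hlam1 : lam < 1) (hσ : 0 < σ)
    (f : ℝ → ℝ)
    (hfLip : ∀ x y : ℝ, |f x - f y| ≤ lam * |x - y|)
    (hfOdd : ∀ x : ℝ, f (-x) = -f x)
    {Ω : Type*} [MeasurableSpace Ω] (P : Measure Ω) [IsProbabilityMeasure P]
    (ξ : ℕ → Ω → ℝ) (hξmeas : ∀ t, Measurable (ξ t))
    (hindep : iIndepFun ξ P)
    (hξ0 : Measure.map (ξ 0) P = gaussianReal 0 1)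
    (hξt : ∀ t : ℕ, 1 ≤ t →
      Measure.map (ξ t) P = gaussianReal 0 ⟨σ ^ 2, sq_nonneg σ⟩)
    (X : ℕ → Ω → ℝ)
    (hX1 : X 1 = ξ 0)
    (hXrec : ∀ t : ℕ, 1 ≤ t → ∀ ω, X (t + 1) ω = f (X t ω) + ξ t ω) :
    ∀ t : ℕ, 1 ≤ t →
      (Measure.map (X t) P = Measure.map (fun ω => -(X t ω)) P) ∧
      (∫ ω, X t ω ∂P = 0) ∧
      (∀ r : ℝ, 0 ≤ r →
        P {ω | r ≤ X t ω} ≤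
          ENNReal.ofReal (Real.exp (-(r ^ 2) /
            (2 * (lam ^ (2 * (t - 1))
              + σ ^ 2 * (1 - lam ^ (2 * (t - 1))) / (1 - lam ^ 2)))))) := by
  -- basic facts about f
  have hf0 : f 0 = 0 := by
    have h := hfOdd 0
    simp only [neg_zero] at h
    linarith
  have hlip : ∀ x, |f x| ≤ lam * |x| := by
    intro x
    have h := hfLip x 0
    simpa [hf0] using h
  have hfMeas : Measurable f := by
    have : LipschitzWith (Real.toNNReal lam) f := by
      apply LipschitzWith.of_dist_le_mul
      intro x y
      rw [Real.dist_eq, Real.dist_eq, Real.coe_toNNReal _ hlam0.le]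
      exact hfLip x y
    exact this.continuous.measurable
  have hexp : ∀ s : ℝ, Measurable fun x : ℝ => Real.exp (s * x) :=
    fun s => (measurable_id.const_mul s).exp
  -- the variance sequence
  obtain ⟨A, hAdef⟩ : ∃ A : ℕ → ℝ, ∀ t : ℕ,
      A t = lam ^ (2 * (t - 1)) + σ ^ 2 * (1 - lam ^ (2 * (t - 1))) / (1 - lam ^ 2) :=
    ⟨_, fun _ => rfl⟩
  have hlam2 : 0 < 1 - lam ^ 2 := by nlinarith
  have hApos : ∀ t : ℕ, 0 < A t := by
    intro t
    rw [hAdef]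
    have h1 : 0 < lam ^ (2 * (t - 1)) := pow_pos hlam0 _
    have h2 : lam ^ (2 * (t - 1)) ≤ 1 := pow_le_one₀ hlam0.le hlam1.le
    have h3 : 0 ≤ σ ^ 2 * (1 - lam ^ (2 * (t - 1))) / (1 - lam ^ 2) :=
      div_nonneg (mul_nonneg (sq_nonneg σ) (by linarith)) hlam2.le
    linarith
  have hA1 : A 1 = 1 := by rw [hAdef]; norm_num
  have hArec : ∀ t : ℕ, 1 ≤ t → A (t + 1) = lam ^ 2 * A t + σ ^ 2 := by
    intro t ht
    obtain ⟨u, rfl⟩ : ∃ u, t = u + 1 := ⟨t - 1, by omega⟩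
    rw [hAdef, hAdef]
    simp only [Nat.add_sub_cancel]
    rw [show 2 * (u + 1) = 2 * u + 2 by ring, pow_add]
    field_simp
    ring
  -- the main induction
  have key : ∀ t : ℕ, 1 ≤ t →
      (∃ g : (Fin t → ℝ) → ℝ, Measurable g ∧ ∀ ω, X t ω = g (fun i => ξ i ω)) ∧
      Measure.map (X t) P = Measure.map (fun ω => -(X t ω)) P ∧
      (∀ s : ℝ, Integrable (fun ω => Real.exp (s * X t ω)) P) ∧
      (∀ s : ℝ, mgf (X t) P s ≤ Real.exp (s ^ 2 * A t / 2)) := by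
    intro t ht
    induction t, ht using Nat.le_induction with
    | base =>
      refine ⟨⟨fun y => y 0, measurable_pi_apply 0, fun ω => by rw [hX1]; rfl⟩, ?_, ?_, ?_⟩
      · rw [hX1, show Measure.map (fun ω => -(ξ 0 ω)) P
            = Measure.map (fun x : ℝ => -x) (Measure.map (ξ 0) P) from
            (Measure.map_map measurable_neg (hξmeas 0)).symm, hξ0, gaussianReal_map_neg']
      · intro s
        have h1 : Integrable (fun x => Real.exp (s * x)) (Measure.map (ξ 0) P) := by
          rw [hξ0]; exact integrable_exp_gaussianReal 1 s
        rw [hX1]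
        exact (integrable_map_measure (hexp s).aestronglyMeasurable
          (hξmeas 0).aemeasurable).mp h1
      · intro s
        have : mgf (X 1) P s = ∫ x, Real.exp (s * x) ∂(Measure.map (ξ 0) P) := by
          rw [integral_map (hξmeas 0).aemeasurable (hexp s).aestronglyMeasurable, hX1]
          rfl
        rw [this, hξ0, integral_exp_gaussianReal, hA1]
        norm_num
    | succ t ht IH =>
      obtain ⟨⟨g, hg, hXg⟩, hsym, hint, hmgf⟩ := IH
      have hXmeas : Measurable (X t) := by
        rw [funext hXg]
        exact hg.comp (measurable_pi_lambda _ fun i => hξmeas i)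
      have hξtmeas := hξmeas t
      -- independence of X t and ξ t
      have hIndep : IndepFun (X t) (ξ t) P := by
        have hD : Disjoint (Finset.range t) ({t} : Finset ℕ) := by
          simp only [Finset.disjoint_left, Finset.mem_range, Finset.mem_singleton]
          exact fun a ha => by omega
        have h := hindep.indepFun_finset (Finset.range t) {t} hD hξmeas
        have hφ : Measurable fun y : ↥(Finset.range t) → ℝ =>
            g (fun i : Fin t => y ⟨(i : ℕ), Finset.mem_range.mpr i.isLt⟩) :=
          hg.comp (measurable_pi_lambda _ fun i => measurable_pi_apply _)
        have hψ : Measurable fun y : ↥({t} : Finset ℕ) → ℝ =>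
            y ⟨t, Finset.mem_singleton_self t⟩ := measurable_pi_apply _
        have h2 := h.comp hφ hψ
        convert h2 using 1
        funext ω; exact hXg ω
        rfl
      -- the noise term
      have hξt_int : ∀ s : ℝ, Integrable (fun ω => Real.exp (s * ξ t ω)) P := by
        intro s
        have h1 : Integrable (fun x => Real.exp (s * x)) (Measure.map (ξ t) P) := by
          rw [hξt t ht]; exact integrable_exp_gaussianReal _ s
        exact (integrable_map_measure (hexp s).aestronglyMeasurable
          hξtmeas.aemeasurable).mp h1
      have hξt_mgf : ∀ s : ℝ, mgf (ξ t) P s = Real.exp (σ ^ 2 * s ^ 2 / 2) := by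
        intro s
        have : mgf (ξ t) P s = ∫ x, Real.exp (s * x) ∂(Measure.map (ξ t) P) := by
          rw [integral_map hξtmeas.aemeasurable (hexp s).aestronglyMeasurable]
          rfl
        rw [this, hξt t ht]
        refine (integral_exp_gaussianReal _ s).trans ?_
        rfl
      -- symmetry transfer
      have hswap : ∀ h : ℝ → ℝ, Measurable h →
          ∫ ω, h (X t ω) ∂P = ∫ ω, h (-(X t ω)) ∂P := by
        intro h hh
        rw [← integral_map hXmeas.aemeasurable hh.aestronglyMeasurable,
          ← integral_map (φ := fun ω => -(X t ω)) hXmeas.neg.aemeasurable hh.aestronglyMeasurable, hsym]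
      -- Y = f ∘ X t
      set Y : Ω → ℝ := fun ω => f (X t ω) with hYdef
      have hYmeas : Measurable Y := hfMeas.comp hXmeas
      have habs : ∀ (s : ℝ) ω, |s * Y ω| ≤ |(s * lam) * X t ω| := by
        intro s ω
        calc |s * Y ω| = |s| * |f (X t ω)| := abs_mul _ _
          _ ≤ |s| * (lam * |X t ω|) :=
            mul_le_mul_of_nonneg_left (hlip _) (abs_nonneg s)
          _ = |(s * lam) * X t ω| := by
            rw [abs_mul, abs_mul, abs_of_nonneg hlam0.le]; ring
      have hY_int : ∀ s : ℝ, Integrable (fun ω => Real.exp (s * Y ω)) P := by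
        intro s
        refine ((hint (s * lam)).add (hint (-(s * lam)))).mono'
          ((hYmeas.const_mul s).exp.aestronglyMeasurable)
          (Filter.Eventually.of_forall fun ω => ?_)
        rw [Real.norm_eq_abs, Real.abs_exp]
        have h1 : Real.exp (s * Y ω) ≤ Real.exp ((s * lam) * X t ω)
            + Real.exp (-((s * lam) * X t ω)) := by
          have h2 : Real.exp (s * Y ω) ≤ Real.exp (s * Y ω) + Real.exp (-(s * Y ω)) := by
            have := Real.exp_pos (-(s * Y ω)); linarith
          exact h2.trans (exp_add_exp_neg_mono (habs s ω))
        simpa [neg_mul] using h1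
      have hY_mgf : ∀ s : ℝ, mgf Y P s ≤ Real.exp (s ^ 2 * (lam ^ 2 * A t) / 2) := by
        intro s
        have i1 : Integrable (fun ω => Real.exp (s * Y ω)) P := hY_int s
        have i2 : Integrable (fun ω => Real.exp (-(s * Y ω))) P := by
          simpa [neg_mul] using hY_int (-s)
        have j1 : Integrable (fun ω => Real.exp ((s * lam) * X t ω)) P := hint (s * lam)
        have j2 : Integrable (fun ω => Real.exp (-((s * lam) * X t ω))) P := by
          simpa [neg_mul] using hint (-(s * lam))
        have e2 : ∫ ω, Real.exp (s * Y ω) ∂P = ∫ ω, Real.exp (-(s * Y ω)) ∂P := by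
          have h := hswap (fun x => Real.exp (s * f x)) ((hfMeas.const_mul s).exp)
          simp only [hfOdd, mul_neg] at h
          exact h
        have e3 : mgf Y P s
            = ∫ ω, (Real.exp (s * Y ω) + Real.exp (-(s * Y ω))) / 2 ∂P := by
          calc mgf Y P s = ∫ ω, Real.exp (s * Y ω) ∂P := rfl
            _ = (∫ ω, Real.exp (s * Y ω) ∂P + ∫ ω, Real.exp (-(s * Y ω)) ∂P) / 2 := by
              rw [← e2]; ring
            _ = ∫ ω, (Real.exp (s * Y ω) + Real.exp (-(s * Y ω))) / 2 ∂P := by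
              rw [integral_div, integral_add i1 i2]
        have e4 : ∫ ω, (Real.exp (s * Y ω) + Real.exp (-(s * Y ω))) / 2 ∂P
            ≤ ∫ ω, (Real.exp ((s * lam) * X t ω) + Real.exp (-((s * lam) * X t ω))) / 2 ∂P := by
          refine integral_mono ((i1.add i2).div_const 2) ((j1.add j2).div_const 2) fun ω => ?_
          have := exp_add_exp_neg_mono (habs s ω)
          simp only []
          linarith
        have e5 : ∫ ω, (Real.exp ((s * lam) * X t ω)
              + Real.exp (-((s * lam) * X t ω))) / 2 ∂P
            = (mgf (X t) P (s * lam) + mgf (X t) P (-(s * lam))) / 2 := by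
          rw [integral_div, integral_add j1 j2]
          simp only [mgf, neg_mul]
        have b1 := hmgf (s * lam)
        have b2 := hmgf (-(s * lam))
        rw [neg_pow] at b2
        have hb2 : mgf (X t) P (-(s * lam)) ≤ Real.exp ((s * lam) ^ 2 * A t / 2) := by
          calc mgf (X t) P (-(s * lam)) ≤ Real.exp ((-(s * lam)) ^ 2 * A t / 2) := hmgf _
            _ = Real.exp ((s * lam) ^ 2 * A t / 2) := by rw [neg_sq]
        have hfin : (s * lam) ^ 2 * A t / 2 = s ^ 2 * (lam ^ 2 * A t) / 2 := by ring
        rw [e3]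
        calc ∫ ω, (Real.exp (s * Y ω) + Real.exp (-(s * Y ω))) / 2 ∂P
            ≤ (mgf (X t) P (s * lam) + mgf (X t) P (-(s * lam))) / 2 := by
              rw [← e5]; exact e4
          _ ≤ Real.exp (s ^ 2 * (lam ^ 2 * A t) / 2) := by rw [← hfin]; linarith
      -- the recursion
      have hXsucc : X (t + 1) = Y + ξ t := funext fun ω => hXrec t ht ω
      have hIndepY : IndepFun Y (ξ t) P := hIndep.comp hfMeas measurable_id
      have hsucc_int : ∀ s : ℝ, Integrable (fun ω => Real.exp (s * X (t + 1) ω)) P := by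
        intro s
        rw [hXsucc]
        exact hIndepY.integrable_exp_mul_add (hY_int s) (hξt_int s)
      have hsucc_mgf : ∀ s : ℝ, mgf (X (t + 1)) P s ≤ Real.exp (s ^ 2 * A (t + 1) / 2) := by
        intro s
        rw [hXsucc, hIndepY.mgf_add (hY_int s).aestronglyMeasurable
          (hξt_int s).aestronglyMeasurable, hξt_mgf]
        calc mgf Y P s * Real.exp (σ ^ 2 * s ^ 2 / 2)
            ≤ Real.exp (s ^ 2 * (lam ^ 2 * A t) / 2) * Real.exp (σ ^ 2 * s ^ 2 / 2) :=
              mul_le_mul_of_nonneg_right (hY_mgf s) (Real.exp_pos _).le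
          _ = Real.exp (s ^ 2 * A (t + 1) / 2) := by
              rw [← Real.exp_add, hArec t ht]; ring_nf
      -- symmetry for t + 1
      have hpair : Measure.map (fun ω => (X t ω, ξ t ω)) P
          = (Measure.map (X t) P).prod (Measure.map (ξ t) P) :=
        (indepFun_iff_map_prod_eq_prod_map_map hXmeas.aemeasurable
          hξtmeas.aemeasurable).mp hIndep
      haveI : IsProbabilityMeasure (Measure.map (X t) P) :=
        Measure.isProbabilityMeasure_map hXmeas.aemeasurable
      haveI : IsProbabilityMeasure (Measure.map (ξ t) P) :=
        Measure.isProbabilityMeasure_map hξtmeas.aemeasurable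
      have hFmeas : Measurable (fun p : ℝ × ℝ => f p.1 + p.2) :=
        (hfMeas.comp measurable_fst).add measurable_snd
      have hnegX : Measure.map (fun x : ℝ => -x) (Measure.map (X t) P)
          = Measure.map (X t) P := by
        rw [Measure.map_map measurable_neg hXmeas]
        exact hsym.symm
      have hnegξ : Measure.map (fun x : ℝ => -x) (Measure.map (ξ t) P)
          = Measure.map (ξ t) P := by
        rw [hξt t ht]
        exact gaussianReal_map_neg' _
      have hpairneg : Measure.map (fun ω => (-(X t ω), -(ξ t ω))) P
          = (Measure.map (X t) P).prod (Measure.map (ξ t) P) := by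
        calc Measure.map (fun ω => (-(X t ω), -(ξ t ω))) P
            = Measure.map (Prod.map (fun x : ℝ => -x) (fun x : ℝ => -x))
                (Measure.map (fun ω => (X t ω, ξ t ω)) P) := by
              rw [Measure.map_map (measurable_neg.prodMap measurable_neg)
                (hXmeas.prodMk hξtmeas)]
              rfl
          _ = Measure.map (Prod.map (fun x : ℝ => -x) (fun x : ℝ => -x))
                ((Measure.map (X t) P).prod (Measure.map (ξ t) P)) := by rw [hpair]
          _ = ((Measure.map (X t) P).map (fun x : ℝ => -x)).prod
                ((Measure.map (ξ t) P).map (fun x : ℝ => -x)) :=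
              (Measure.map_prod_map _ _ measurable_neg measurable_neg).symm
          _ = (Measure.map (X t) P).prod (Measure.map (ξ t) P) := by
              rw [hnegX, hnegξ]
      have hmap1 : Measure.map (X (t + 1)) P
          = Measure.map (fun p : ℝ × ℝ => f p.1 + p.2)
              ((Measure.map (X t) P).prod (Measure.map (ξ t) P)) := by
        rw [← hpair, Measure.map_map hFmeas (hXmeas.prodMk hξtmeas)]
        exact congrArg (fun h : Ω → ℝ => Measure.map h P)
          (funext fun ω => hXrec t ht ω)
      have hmap2 : Measure.map (fun ω => -(X (t + 1) ω)) P
          = Measure.map (fun p : ℝ × ℝ => f p.1 + p.2)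
              ((Measure.map (X t) P).prod (Measure.map (ξ t) P)) := by
        rw [← hpairneg, Measure.map_map (f := fun ω => (-(X t ω), -(ξ t ω))) hFmeas (hXmeas.neg.prodMk hξtmeas.neg)]
        exact congrArg (fun h : Ω → ℝ => Measure.map h P)
          (funext fun ω => show -(X (t + 1) ω) = f (-(X t ω)) + -(ξ t ω) by
            rw [hXrec t ht ω, hfOdd]; ring)
      refine ⟨?_, hmap1.trans hmap2.symm, hsucc_int, hsucc_mgf⟩
      -- representation for t + 1
      refine ⟨fun y => f (g (fun i : Fin t => y i.castSucc)) + y (Fin.last t), ?_, ?_⟩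
      · exact (hfMeas.comp (hg.comp
          (measurable_pi_lambda _ fun i => measurable_pi_apply _))).add (measurable_pi_apply _)
      · intro ω
        rw [hXrec t ht ω, hXg ω]
        simp [Fin.coe_castSucc, Fin.val_last]
  -- conclusion
  intro t ht
  obtain ⟨⟨g, hg, hXg⟩, hsym, hint, hmgf⟩ := key t ht
  have hXmeas : Measurable (X t) := by
    rw [funext hXg]
    exact hg.comp (measurable_pi_lambda _ fun i => hξmeas i)
  refine ⟨hsym, ?_, ?_⟩
  · -- zero mean
    have hXint : Integrable (X t) P := by
      refine ((hint 1).add (hint (-1))).mono' hXmeas.aestronglyMeasurable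
        (Filter.Eventually.of_forall fun ω => ?_)
      rw [Real.norm_eq_abs]
      simp only [Pi.add_apply, one_mul, neg_one_mul]
      have h1 := Real.add_one_le_exp (X t ω)
      have h2 := Real.add_one_le_exp (-(X t ω))
      have h3 := Real.exp_pos (X t ω)
      have h4 := Real.exp_pos (-(X t ω))
      rcases abs_cases (X t ω) with ⟨h5, _⟩ | ⟨h5, _⟩ <;> rw [h5] <;> linarith
    have h0 : ∫ ω, X t ω ∂P = ∫ ω, -(X t ω) ∂P := by
      calc ∫ ω, X t ω ∂P = ∫ x, x ∂(Measure.map (X t) P) :=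
            (integral_map hXmeas.aemeasurable aestronglyMeasurable_id).symm
        _ = ∫ x, x ∂(Measure.map (fun ω => -(X t ω)) P) := by rw [hsym]
        _ = ∫ ω, -(X t ω) ∂P :=
            integral_map hXmeas.neg.aemeasurable aestronglyMeasurable_id
    rw [integral_neg] at h0
    linarith
  · -- tail bound
    intro r hr
    have ha := hApos t
    set s : ℝ := r / A t with hs
    have hs0 : 0 ≤ s := div_nonneg hr ha.le
    have h1 := measure_ge_le_exp_mul_mgf (μ := P) (X := X t) (t := s) r hs0 (hint s)
    have h2 : Real.exp (-s * r) * mgf (X t) P s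
        ≤ Real.exp (-s * r) * Real.exp (s ^ 2 * A t / 2) :=
      mul_le_mul_of_nonneg_left (hmgf s) (Real.exp_pos _).le
    rw [← Real.exp_add] at h2
    have h3 : -s * r + s ^ 2 * A t / 2 = -(r ^ 2) / (2 * A t) := by
      rw [hs]; field_simp; ring
    rw [h3] at h2
    have hb : (P {ω | r ≤ X t ω}).toReal ≤ Real.exp (-(r ^ 2) / (2 * A t)) :=
      h1.trans h2
    rw [← hAdef t]
    calc P {ω | r ≤ X t ω}
        = ENNReal.ofReal (P {ω | r ≤ X t ω}).toReal :=
          (ENNReal.ofReal_toReal (measure_ne_top _ _)).symm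
      _ ≤ ENNReal.ofReal (Real.exp (-(r ^ 2) / (2 * A t))) :=
          ENNReal.ofReal_le_ofReal hb
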